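/- Let Q be a cycle in a graph and let (Z1, Z2) be a nontrivial (Q,r)-scheme with |Z2| = 1. Then |Q| ≥ 2|Z1| + 2r − 4. -/

import Mathlib

/-- Arc condition within one set of a `(Q,r)`-scheme: the cycle `Q` is modeled as `ZMod n`
(vertices `0,…,n-1` in the chosen orientation), and the arc from `x` to `y` in the chosen
direction has length `(y - x).val`.  Within one `Zᵢ`, arcs between distinct vertices have
length at least `2`. -/
def ArcWithin (n : ℕ) (Z : Finset (ZMod n)) : Prop :=
  ∀ x ∈ Z, ∀ y ∈ Z, x ≠ y → 2 ≤ (y - x).val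

/-- Arc condition between two different sets of a `(Q,r)`-scheme: arcs between distinct
vertices of different sets have length at least `r` (applied in both orders, this gives
both directions). -/
def ArcBetween (n r : ℕ) (Z W : Finset (ZMod n)) : Prop :=
  ∀ x ∈ Z, ∀ y ∈ W, x ≠ y → r ≤ (y - x).val

theorem stmt3 (n r : ℕ) (hn : 3 ≤ n) (hr : 2 ≤ r)
    (Z1 Z2 : Finset (ZMod n))
    (h1 : ArcWithin n Z1) (h2 : ArcWithin n Z2)
    (h12 : ArcBetween n r Z1 Z2) (h21 : ArcBetween n r Z2 Z1)
    (hnontriv : ∃ z1 ∈ Z1, ∃ z2 ∈ Z2, z1 ≠ z2)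
    (hZ2 : Z2.card = 1)
    : 2 * (Z1.card : ℤ) + 2 * r - 4 ≤ (n : ℤ) := by
  haveI : NeZero n := ⟨by omega⟩
  obtain ⟨z1, hz1, z2, hz2, hne⟩ := hnontriv
  -- basic facts for elements of `Z1.erase z2`
  have key : ∀ x ∈ Z1.erase z2, r ≤ (x - z2).val ∧ (x - z2).val + r ≤ n := by
    intro x hx
    obtain ⟨hxne, hxZ1⟩ := Finset.mem_erase.mp hx
    have hlow : r ≤ (x - z2).val := h21 z2 hz2 x hxZ1 (Ne.symm hxne)
    have hhigh : r ≤ (z2 - x).val := h12 x hxZ1 z2 hz2 hxne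
    have hsub : x - z2 ≠ 0 := by
      intro h; apply hxne; exact sub_eq_zero.mp h
    have hneg : (z2 - x).val = n - (x - z2).val := by
      have : z2 - x = -(x - z2) := by ring
      rw [this, ZMod.neg_val, if_neg hsub]
    have hlt : (x - z2).val < n := ZMod.val_lt _
    omega
  have spacing : ∀ x ∈ Z1.erase z2, ∀ y ∈ Z1.erase z2,
      (x - z2).val < (y - z2).val → (x - z2).val + 2 ≤ (y - z2).val := by
    intro x hx y hy hlt
    obtain ⟨hxne, hxZ1⟩ := Finset.mem_erase.mp hx
    obtain ⟨hyne, hyZ1⟩ := Finset.mem_erase.mp hy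
    have hxy : x ≠ y := by rintro rfl; exact lt_irrefl _ hlt
    have h2 : 2 ≤ (y - x).val := h1 x hxZ1 y hyZ1 hxy
    have : y - x = (y - z2) - (x - z2) := by ring
    rw [this, ZMod.val_sub (le_of_lt hlt)] at h2
    omega
  -- translate to a finset of naturals
  set S : Finset ℕ := (Z1.erase z2).image (fun x => (x - z2).val) with hSdef
  have hScard : S.card = (Z1.erase z2).card := by
    apply Finset.card_image_of_injOn
    intro a _ b _ hab
    have := ZMod.val_injective n hab
    have : a - z2 = b - z2 := this
    have := sub_left_injective (G := ZMod n) this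
    exact this
  have hSmem : ∀ v ∈ S, r ≤ v ∧ v + r ≤ n := by
    intro v hv
    obtain ⟨x, hx, rfl⟩ := Finset.mem_image.mp hv
    exact key x hx
  have hSspace : ∀ u ∈ S, ∀ v ∈ S, u < v → u + 2 ≤ v := by
    intro u hu v hv huv
    obtain ⟨x, hx, rfl⟩ := Finset.mem_image.mp hu
    obtain ⟨y, hy, rfl⟩ := Finset.mem_image.mp hv
    exact spacing x hx y hy huv
  -- `2r ≤ n` since `S` is nonempty
  have hz1S : (z1 - z2).val ∈ S :=
    Finset.mem_image_of_mem _ (Finset.mem_erase.mpr ⟨hne, hz1⟩)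
  have h2rn : 2 * r ≤ n := by
    obtain ⟨h1', h2'⟩ := hSmem _ hz1S
    omega
  -- inject `S` into `Iic ((n - 2r)/2)` via `v ↦ (v - r)/2`
  have hcard : S.card ≤ (n - 2 * r) / 2 + 1 := by
    have := Finset.card_le_card_of_injOn (f := fun v => (v - r) / 2)
      (t := Finset.Iic ((n - 2 * r) / 2))
      (by
        intro v hv
        obtain ⟨h1', h2'⟩ := hSmem v hv
        simp only [Finset.mem_coe, Finset.mem_Iic]
        exact Nat.div_le_div_right (by omega))
      (by
        intro u hu v hv h
        simp only at h
        by_contra hne'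
        rcases Nat.lt_or_ge u v with hlt | hge
        · have hs := hSspace u hu v hv hlt
          have hur := (hSmem u hu).1
          have : (u - r + 2) / 2 ≤ (v - r) / 2 := Nat.div_le_div_right (by omega)
          rw [Nat.add_div_right _ (by norm_num)] at this
          omega
        · have hlt : v < u := lt_of_le_of_ne hge (fun h' => hne' h'.symm)
          have hs := hSspace v hv u hu hlt
          have hvr := (hSmem v hv).1
          have : (v - r + 2) / 2 ≤ (u - r) / 2 := Nat.div_le_div_right (by omega)
          rw [Nat.add_div_right _ (by norm_num)] at this
          omega)
    simpa [Nat.card_Iic] using this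
  have hZ1card : Z1.card ≤ S.card + 1 := by
    rw [hScard]
    have := Finset.pred_card_le_card_erase (s := Z1) (a := z2)
    omega
  have hdiv : 2 * ((n - 2 * r) / 2) ≤ n - 2 * r := Nat.mul_div_le _ _
  have : 2 * Z1.card + 2 * r ≤ n + 4 := by omega
  have hcast : (2 * Z1.card + 2 * r : ℤ) ≤ (n : ℤ) + 4 := by exact_mod_cast this
  omega
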